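/- (Incidence of a point with a line.) Let p, q, x ∈ EuclideanSpace ℝ (Fin 3) with p ≠ q, and work in the exterior algebra Λ = ExteriorAlgebra ℝ (EuclideanSpace ℝ (Fin 3)). Then the two conditions ι(p)*ι(q) + ι(q−p)*ι(x) = 0 (vanishing of the bivector part of 𝓛⌣X) and ι(p)*ι(q)*ι(x) = 0 (vanishing of the trivector part of 𝓛⌣X) hold simultaneously if and only if there exists t ∈ ℝ such that x = p + t•(q − p). That is, 𝓛⌣X = 0 for the biparavector 𝓛 = (q−p) + p∧q representing the line segment from P to Q and the paravector X = 1 + x exactly when the point X lies on the line through P and Q. -/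

import Mathlib

open ExteriorAlgebra

noncomputable section

/-- The alternating 2-form on `EuclideanSpace ℝ (Fin 3)` given by the `(i,j)` minor. -/
def minorForm (i j : Fin 3) : (EuclideanSpace ℝ (Fin 3)) [⋀^Fin 2]→ₗ[ℝ] ℝ :=
  (Matrix.detRowAlternating (R := ℝ) (n := Fin 2)).compLinearMap
    { toFun := fun v => ![v i, v j]
      map_add' := by intro a b; funext k; fin_cases k <;> simp
      map_smul' := by intro c a; funext k; fin_cases k <;> simp }

lemma minor_eq_zero (u w : EuclideanSpace ℝ (Fin 3))
    (h : ExteriorAlgebra.ι ℝ u * ExteriorAlgebra.ι ℝ w = 0) (i j : Fin 3) :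
    u i * w j - u j * w i = 0 := by
  classical
  set f : ∀ n : ℕ, (EuclideanSpace ℝ (Fin 3)) [⋀^Fin n]→ₗ[ℝ] ℝ :=
    Function.update (fun n => 0) 2 (minorForm i j) with hf
  have hmul : ExteriorAlgebra.ι ℝ u * ExteriorAlgebra.ι ℝ w =
      ExteriorAlgebra.ιMulti ℝ 2 ![u, w] := by
    rw [ιMulti_apply]
    simp [List.ofFn_succ]
  have h0 : liftAlternating f (ExteriorAlgebra.ιMulti ℝ 2 ![u, w]) = 0 := by
    rw [← hmul, h, map_zero]
  rw [liftAlternating_apply_ιMulti] at h0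
  have hf2 : f 2 = minorForm i j := by simp [hf]
  rw [hf2] at h0
  have h0' : Matrix.det (!![u i, u j; w i, w j]) = 0 := by
    simp only [minorForm, AlternatingMap.compLinearMap_apply, LinearMap.coe_mk,
      AddHom.coe_mk] at h0
    convert h0 using 2
    change Matrix.det _ = Matrix.det _
    congr 1
    ext a b
    fin_cases a <;> fin_cases b <;> simp
  rw [Matrix.det_fin_two] at h0'
  simpa using h0'

lemma wedge_zero_dep (u w : EuclideanSpace ℝ (Fin 3)) (hu : u ≠ 0)
    (h : ExteriorAlgebra.ι ℝ u * ExteriorAlgebra.ι ℝ w = 0) :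
    ∃ t : ℝ, w = t • u := by
  obtain ⟨k, hk⟩ : ∃ k, u k ≠ 0 := by
    by_contra hc
    push_neg at hc
    exact hu (by ext k; simpa using hc k)
  refine ⟨w k / u k, ?_⟩
  ext i
  have h1 := minor_eq_zero u w h k i
  have : u k * w i = u i * w k := by linarith
  have : w i = w k / u k * u i := by field_simp; linarith
  simpa [PiLp.smul_apply, smul_eq_mul] using this

/-- incidence of a point with a line. For distinct points located at
`p` and `q`, the biparavector equation `𝓛⌣X = 0` (vanishing of the bivector part
`p∧q + (q−p)∧x` and of the trivector part `p∧q∧x`) holds exactly when `x` lies on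
the line through `p` and `q`. -/
theorem point_on_line_iff (p q x : EuclideanSpace ℝ (Fin 3)) (hpq : p ≠ q) :
    (ExteriorAlgebra.ι ℝ p * ExteriorAlgebra.ι ℝ q +
          ExteriorAlgebra.ι ℝ (q - p) * ExteriorAlgebra.ι ℝ x = 0 ∧
        ExteriorAlgebra.ι ℝ p * ExteriorAlgebra.ι ℝ q * ExteriorAlgebra.ι ℝ x = 0) ↔
      ∃ t : ℝ, x = p + t • (q - p) := by
  have hpp : ExteriorAlgebra.ι ℝ p * ExteriorAlgebra.ι ℝ p = 0 := ι_sq_zero p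
  have hqq : ExteriorAlgebra.ι ℝ q * ExteriorAlgebra.ι ℝ q = 0 := ι_sq_zero q
  have hswap : ExteriorAlgebra.ι ℝ q * ExteriorAlgebra.ι ℝ p =
      -(ExteriorAlgebra.ι ℝ p * ExteriorAlgebra.ι ℝ q) := by
    exact eq_neg_of_add_eq_zero_left (ι_add_mul_swap q p)
  constructor
  · rintro ⟨h1, -⟩
    have hu : q - p ≠ 0 := sub_ne_zero.mpr (Ne.symm hpq)
    have hw : ExteriorAlgebra.ι ℝ (q - p) * ExteriorAlgebra.ι ℝ (x - p) = 0 := by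
      have : ExteriorAlgebra.ι ℝ (q - p) * ExteriorAlgebra.ι ℝ (x - p) =
          ExteriorAlgebra.ι ℝ p * ExteriorAlgebra.ι ℝ q +
            ExteriorAlgebra.ι ℝ (q - p) * ExteriorAlgebra.ι ℝ x := by
        simp only [map_sub, sub_mul, mul_sub, hpp, hswap]
        abel
      rw [this, h1]
    obtain ⟨t, ht⟩ := wedge_zero_dep _ _ hu hw
    exact ⟨t, by rw [← sub_eq_iff_eq_add']; exact ht⟩
  · rintro ⟨t, rfl⟩
    have hx : ExteriorAlgebra.ι ℝ (p + t • (q - p)) =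
        ExteriorAlgebra.ι ℝ p + t • (ExteriorAlgebra.ι ℝ q - ExteriorAlgebra.ι ℝ p) := by
      simp [map_add, map_smul, map_sub]
    have haba : ExteriorAlgebra.ι ℝ p * ExteriorAlgebra.ι ℝ q * ExteriorAlgebra.ι ℝ p = 0 := by
      rw [mul_assoc, hswap, mul_neg, ← mul_assoc, hpp, zero_mul, neg_zero]
    have habb : ExteriorAlgebra.ι ℝ p * ExteriorAlgebra.ι ℝ q * ExteriorAlgebra.ι ℝ q = 0 := by
      rw [mul_assoc, hqq, mul_zero]
    have hbab : ExteriorAlgebra.ι ℝ q * (ExteriorAlgebra.ι ℝ p * ExteriorAlgebra.ι ℝ q) = 0 := by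
      rw [← mul_assoc, hswap, neg_mul, mul_assoc, hqq, mul_zero, neg_zero]
    constructor
    · rw [hx]
      simp only [map_sub, sub_mul, mul_add, add_mul, mul_sub, sub_mul, mul_smul_comm,
        smul_mul_assoc, smul_sub, hpp, hqq, hswap, mul_neg, neg_mul, smul_neg, smul_zero]
      abel
    · rw [hx]
      simp only [mul_add, mul_smul_comm, mul_sub, haba, habb, smul_zero, sub_zero,
        zero_sub, smul_neg, neg_zero, add_zero, sub_self, zero_add]
end
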